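/- Let h ∈ C²[0,T], 0 < α < 1, nodes t_j = jΔt with N_T Δt = T. Define the L1 approximation F_t^α h^k recursively by F_t^α h^1 = (b_{1,1}/(αΔt))(h(t_1) - h(0)) and F_t^α h^k = exp(-αΔt/(1-α)) F_t^α h^{k-1} + (b_{k,k}/(αΔt))(h(t_k) - h(t_{k-1})), where b_{k,k} = 1 - exp(-αΔt/(1-α)). Then for all 1 ≤ k ≤ N_T, |CFD_t^α h(t_k) - F_t^α h^k| ≤ (αT/(8(1-α)²)) · max_{t∈[0,T]} |h''(t)| · (Δt)². -/

import Mathlib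

open Real
open intervalIntegral MeasureTheory

lemma exp_neg_lip (x y : ℝ) (hx : 0 ≤ x) (hy : 0 ≤ y) :
    |Real.exp (-x) - Real.exp (-y)| ≤ |x - y| := by
  wlog hxy : x ≤ y generalizing x y
  · rw [abs_sub_comm, abs_sub_comm x y]; exact this y x hy hx (le_of_not_ge hxy)
  have h1 : Real.exp (-y) ≤ Real.exp (-x) := Real.exp_le_exp.mpr (by linarith)
  have h2 : Real.exp (-x) ≤ 1 := by rw [Real.exp_le_one_iff]; linarith
  rw [abs_of_nonneg (by linarith), abs_of_nonpos (by linarith)]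
  have h3 : (x - y) + 1 ≤ Real.exp (x - y) := Real.add_one_le_exp _
  have h4 : Real.exp (-y) = Real.exp (-x) * Real.exp (x - y) := by
    rw [← Real.exp_add]; ring_nf
  nlinarith [Real.exp_pos (-x), Real.exp_pos (x - y)]

lemma cont_abs_sub (x : ℝ) : Continuous (fun u : ℝ => |u - x|) :=
  (continuous_id.sub continuous_const).abs

lemma int_abs_sub (a b x : ℝ) (hax : a ≤ x) (hxb : x ≤ b) :
    ∫ u in a..b, |u - x| = ((x - a) ^ 2 + (b - x) ^ 2) / 2 := by
  have i1 : IntervalIntegrable (fun u : ℝ => |u - x|) MeasureTheory.volume a x := (cont_abs_sub x).intervalIntegrable a x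
  have i2 : IntervalIntegrable (fun u : ℝ => |u - x|) MeasureTheory.volume x b := (cont_abs_sub x).intervalIntegrable x b
  rw [← intervalIntegral.integral_add_adjacent_intervals i1 i2]
  have e1 : (∫ u in a..x, |u - x|) = ∫ u in a..x, x - u := by
    apply intervalIntegral.integral_congr
    intro u hu
    rw [Set.uIcc_of_le hax] at hu
    simp only
    rw [abs_of_nonpos (by linarith [hu.2])]; ring
  have e2 : (∫ u in x..b, |u - x|) = ∫ u in x..b, u - x := by
    apply intervalIntegral.integral_congr
    intro u hu
    rw [Set.uIcc_of_le hxb] at hu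
    simp only
    rw [abs_of_nonneg (by linarith [hu.1])]
  have ic : ∀ y z w : ℝ, IntervalIntegrable (fun u : ℝ => w) MeasureTheory.volume y z :=
    fun y z w => intervalIntegrable_const
  have ii : ∀ y z : ℝ, IntervalIntegrable (fun u : ℝ => u) MeasureTheory.volume y z :=
    fun y z => (continuous_id : Continuous (fun u : ℝ => u)).intervalIntegrable y z
  rw [e1, e2, intervalIntegral.integral_sub (ic _ _ _) (ii _ _),
    intervalIntegral.integral_sub (ii _ _) (ic _ _ _),
    integral_id, integral_id, intervalIntegral.integral_const, intervalIntegral.integral_const]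
  simp only [smul_eq_mul]
  ring

lemma deriv_lip (h : ℝ → ℝ) (hd2 : Differentiable ℝ (deriv h))
    (a b M : ℝ) (hM : ∀ t ∈ Set.Icc a b, |deriv (deriv h) t| ≤ M)
    (s u : ℝ) (hs : s ∈ Set.Icc a b) (hu : u ∈ Set.Icc a b) :
    |deriv h s - deriv h u| ≤ M * |s - u| := by
  have := Convex.norm_image_sub_le_of_norm_deriv_le
    (f := deriv h) (s := Set.Icc a b) (C := M)
    (fun x _ => hd2 x) (fun x hx => hM x hx) (convex_Icc a b) hu hs
  simpa [Real.norm_eq_abs] using this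

lemma int_weight (c a b : ℝ) (hc : 0 < c) :
    ∫ s in a..b, Real.exp (-(c * (b - s))) = (1 - Real.exp (-(c * (b - a)))) / c := by
  have hd : ∀ x ∈ Set.uIcc a b,
      HasDerivAt (fun s => (1 / c) * Real.exp (-(c * (b - s))))
        (Real.exp (-(c * (b - x)))) x := by
    intro x _
    have h1 : HasDerivAt (fun s : ℝ => -(c * (b - s))) c x := by
      have h0 : HasDerivAt (fun s : ℝ => c * s - c * b) (c * 1) x :=
        ((hasDerivAt_id x).const_mul c).sub_const (c * b)
      have h0' : HasDerivAt (fun s : ℝ => c * s - c * b) c x := by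
        simpa using h0
      convert h0' using 2 with s
      ring
    have h3 := (h1.exp).const_mul (1 / c)
    convert h3 using 1
    · rfl
    · rfl
    · rw [one_div, inv_mul_eq_div, mul_div_assoc, div_self hc.ne', mul_one]
  rw [intervalIntegral.integral_eq_sub_of_hasDerivAt hd
    ((Continuous.intervalIntegrable (by fun_prop) a b))]
  rw [show -(c * (b - b)) = 0 by ring, Real.exp_zero]
  field_simp

lemma pointwise_bound (h : ℝ → ℝ) (hd1 : Differentiable ℝ h)
    (hd2 : Differentiable ℝ (deriv h))
    (a b M : ℝ) (hab : a < b) (hM : ∀ t ∈ Set.Icc a b, |deriv (deriv h) t| ≤ M)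
    (s : ℝ) (hs : s ∈ Set.Icc a b) :
    |deriv h s - (h b - h a) / (b - a)| ≤ M * (b - a) / 2 := by
  have hM0 : 0 ≤ M := le_trans (abs_nonneg _) (hM a ⟨le_refl a, hab.le⟩)
  have ftc : (∫ u in a..b, deriv h u) = h b - h a :=
    intervalIntegral.integral_deriv_eq_sub (fun x _ => hd1 x)
      (hd2.continuous.intervalIntegrable a b)
  have key : |(b - a) * deriv h s - (h b - h a)| ≤ M * (b - a) ^ 2 / 2 := by
    have e : (b - a) * deriv h s - (h b - h a)
        = ∫ u in a..b, (deriv h s - deriv h u) := by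
      rw [intervalIntegral.integral_sub intervalIntegrable_const
        (hd2.continuous.intervalIntegrable a b), ftc, intervalIntegral.integral_const]
      simp [smul_eq_mul]
    rw [e]
    have step : ‖∫ u in a..b, (deriv h s - deriv h u)‖ ≤
        |∫ u in a..b, M * abs (u - s)| := by
      apply intervalIntegral.norm_integral_le_abs_of_norm_le
      · apply MeasureTheory.ae_restrict_of_forall_mem measurableSet_uIoc
        intro u hu
        rw [Set.uIoc_of_le hab.le] at hu
        have hu' : u ∈ Set.Icc a b := ⟨hu.1.le, hu.2⟩
        rw [Real.norm_eq_abs]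
        calc |deriv h s - deriv h u| ≤ M * |s - u| := deriv_lip h hd2 a b M hM s u hs hu'
          _ = M * abs (u - s) := by rw [abs_sub_comm]
      · exact ((continuous_const.mul (cont_abs_sub s)).intervalIntegrable a b)
    rw [Real.norm_eq_abs] at step
    apply le_trans step
    rw [intervalIntegral.integral_const_mul, int_abs_sub a b s hs.1 hs.2,
      abs_of_nonneg (by positivity)]
    have h1 : (s - a) ^ 2 + (b - s) ^ 2 ≤ (b - a) ^ 2 := by nlinarith [hs.1, hs.2]
    nlinarith
  have hba : 0 < b - a := by linarith
  rw [show deriv h s - (h b - h a) / (b - a)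
      = ((b - a) * deriv h s - (h b - h a)) / (b - a) by field_simp,
    abs_div, abs_of_pos hba, div_le_iff₀ hba]
  calc |(b - a) * deriv h s - (h b - h a)| ≤ M * (b - a) ^ 2 / 2 := key
    _ = M * (b - a) / 2 * (b - a) := by ring

lemma core_est (c M Δt a : ℝ) (h : ℝ → ℝ) (hc : 0 < c) (hΔ : 0 < Δt)
    (hd1 : Differentiable ℝ h) (hd2 : Differentiable ℝ (deriv h))
    (hM : ∀ t ∈ Set.Icc a (a + Δt), |deriv (deriv h) t| ≤ M) :
    |(∫ s in a..(a + Δt), deriv h s * Real.exp (-(c * (a + Δt - s)))) -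
      (1 - Real.exp (-(c * Δt))) / (c * Δt) * (h (a + Δt) - h a)| ≤ c * M * Δt ^ 3 / 8 := by
  set b := a + Δt with hb
  have hab : a < b := by simp [hb]; linarith
  set m := a + Δt / 2 with hm
  set δ := (h b - h a) / Δt with hδ
  set wm := Real.exp (-(c * (b - m))) with hwm
  have hM0 : 0 ≤ M := le_trans (abs_nonneg _) (hM a ⟨le_refl a, by linarith⟩)
  have wcont : Continuous (fun s : ℝ => Real.exp (-(c * (b - s)))) := by fun_prop
  have hcont : Continuous (deriv h) := hd2.continuous
  have Ia : IntervalIntegrable (fun s => deriv h s * Real.exp (-(c * (b - s)))) volume a b :=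
    (hcont.mul wcont).intervalIntegrable a b
  have Ib : IntervalIntegrable (fun s => wm * deriv h s) volume a b :=
    (continuous_const.mul hcont).intervalIntegrable a b
  have Ic : IntervalIntegrable (fun s => δ * Real.exp (-(c * (b - s)))) volume a b :=
    (continuous_const.mul wcont).intervalIntegrable a b
  have Id : IntervalIntegrable (fun _ : ℝ => δ * wm) volume a b := intervalIntegrable_const
  have ftc : (∫ u in a..b, deriv h u) = h b - h a :=
    intervalIntegral.integral_deriv_eq_sub (fun x _ => hd1 x)
      (hcont.intervalIntegrable a b)
  have iw : (∫ s in a..b, Real.exp (-(c * (b - s)))) = (1 - Real.exp (-(c * Δt))) / c := by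
    rw [int_weight c a b hc, show b - a = Δt by rw [hb]; ring]
  have hδΔ : δ * Δt = h b - h a := by rw [hδ]; field_simp
  have key : (∫ s in a..b, deriv h s * Real.exp (-(c * (b - s)))) -
      (1 - Real.exp (-(c * Δt))) / (c * Δt) * (h b - h a) =
      ∫ s in a..b, (deriv h s - δ) * (Real.exp (-(c * (b - s))) - wm) := by
    have e0 : (fun s => (deriv h s - δ) * (Real.exp (-(c * (b - s))) - wm))
        = fun s => (deriv h s * Real.exp (-(c * (b - s))) - wm * deriv h s)
          - (δ * Real.exp (-(c * (b - s))) - δ * wm) := by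
      funext s; ring
    rw [e0, intervalIntegral.integral_sub (Ia.sub Ib) (Ic.sub Id),
      intervalIntegral.integral_sub Ia Ib, intervalIntegral.integral_sub Ic Id,
      intervalIntegral.integral_const_mul, intervalIntegral.integral_const_mul,
      ftc, iw, intervalIntegral.integral_const]
    have e1 : (1 - Real.exp (-(c * Δt))) / (c * Δt) * (h b - h a)
        = δ * ((1 - Real.exp (-(c * Δt))) / c) := by
      rw [hδ]; field_simp
    have e2 : wm * (h b - h a) = (b - a) • (δ * wm) := by
      rw [← hδΔ, smul_eq_mul, show b - a = Δt by rw [hb]; ring]; ring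
    rw [e1, e2]
    ring
  rw [key]
  -- now bound the integral
  have ptw : ∀ t ∈ Set.uIoc a b,
      ‖(deriv h t - δ) * (Real.exp (-(c * (b - t))) - wm)‖
        ≤ (M * Δt / 2) * (c * abs (t - m)) := by
    intro t ht
    rw [Set.uIoc_of_le hab.le] at ht
    have ht' : t ∈ Set.Icc a b := ⟨ht.1.le, ht.2⟩
    rw [Real.norm_eq_abs, abs_mul]
    have b1 : |deriv h t - δ| ≤ M * Δt / 2 := by
      have := pointwise_bound h hd1 hd2 a b M hab hM t ht'
      rwa [show b - a = Δt by rw [hb]; ring] at this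
    have b2 : |Real.exp (-(c * (b - t))) - wm| ≤ c * abs (t - m) := by
      have hx : 0 ≤ c * (b - t) := mul_nonneg hc.le (by linarith [ht'.2])
      have hy : 0 ≤ c * (b - m) := mul_nonneg hc.le (by rw [hb, hm]; linarith)
      have := exp_neg_lip (c * (b - t)) (c * (b - m)) hx hy
      calc |Real.exp (-(c * (b - t))) - wm| ≤ |c * (b - t) - c * (b - m)| := this
        _ = c * abs (t - m) := by
            rw [show c * (b - t) - c * (b - m) = c * (m - t) by ring, abs_mul,
              abs_of_pos hc, abs_sub_comm]
    exact mul_le_mul b1 b2 (abs_nonneg _) (by positivity)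
  have step : ‖(∫ s in a..b, (deriv h s - δ) * (Real.exp (-(c * (b - s))) - wm))‖ ≤
      |(∫ s in a..b, (M * Δt / 2) * (c * abs (s - m)))| := by
    apply intervalIntegral.norm_integral_le_abs_of_norm_le
    · exact MeasureTheory.ae_restrict_of_forall_mem measurableSet_uIoc ptw
    · exact (continuous_const.mul (continuous_const.mul (cont_abs_sub m))).intervalIntegrable a b
  rw [Real.norm_eq_abs] at step
  apply le_trans step
  have gcomp : (∫ s in a..b, (M * Δt / 2) * (c * abs (s - m)))
      = (M * Δt / 2) * c * (Δt ^ 2 / 4) := by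
    have e3 : (fun s : ℝ => (M * Δt / 2) * (c * abs (s - m)))
        = fun s : ℝ => ((M * Δt / 2) * c) * abs (s - m) := by funext s; ring
    rw [e3, intervalIntegral.integral_const_mul,
      int_abs_sub a b m (by rw [hm]; linarith) (by rw [hm, hb]; linarith)]
    rw [show m - a = Δt / 2 by rw [hm]; ring, show b - m = Δt / 2 by rw [hm, hb]; ring]
    ring
  rw [gcomp, abs_of_nonneg (by positivity)]
  nlinarith [hΔ, hM0, hc]

/-- Caputo-Fabrizio derivative of order `α`. -/
noncomputable def CFD (α : ℝ) (h : ℝ → ℝ) (t : ℝ) : ℝ :=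
  (1 / (1 - α)) * ∫ s in (0:ℝ)..t, deriv h s * Real.exp (-α * (t - s) / (1 - α))

theorem fast_L1_error (α T : ℝ) (NT : ℕ) (hNT : 1 ≤ NT)
    (hα0 : 0 < α) (hα1 : α < 1) (hT : 0 < T)
    (Δt : ℝ) (hΔt : Δt = T / NT)
    (h : ℝ → ℝ) (hh : ContDiff ℝ 2 h)
    (M : ℝ) (hM : ∀ t ∈ Set.Icc (0:ℝ) T, |deriv (deriv h) t| ≤ M)
    (F : ℕ → ℝ)
    (hF1 : F 1 = (1 - Real.exp (-α * Δt / (1 - α))) / (α * Δt) * (h Δt - h 0))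
    (hFk : ∀ k : ℕ, 2 ≤ k →
      F k = Real.exp (-α * Δt / (1 - α)) * F (k - 1) +
        (1 - Real.exp (-α * Δt / (1 - α))) / (α * Δt) *
          (h ((k : ℝ) * Δt) - h (((k : ℝ) - 1) * Δt))) :
    ∀ k : ℕ, 1 ≤ k → k ≤ NT →
      |CFD α h ((k : ℝ) * Δt) - F k| ≤
        α * T / (8 * (1 - α) ^ 2) * M * Δt ^ 2 := by
  have h1α : 0 < 1 - α := by linarith
  set c : ℝ := α / (1 - α) with hcdef
  have hc : 0 < c := div_pos hα0 h1α
  have hcα : (1 - α) * c = α := by rw [hcdef]; field_simp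
  have hNT0 : 0 < (NT:ℝ) := by exact_mod_cast hNT
  have hΔ : 0 < Δt := by rw [hΔt]; positivity
  have hNTΔ : (NT:ℝ) * Δt = T := by rw [hΔt]; field_simp
  have hd1 : Differentiable ℝ h := hh.differentiable (by norm_num)
  have hd2 : Differentiable ℝ (deriv h) := by
    have h2 : ContDiff ℝ ((1:ℕ∞) + 1) h := by apply hh.of_le; norm_num
    exact ((contDiff_succ_iff_deriv.mp h2).2.2).differentiable (by norm_num)
  have earg : ∀ x y : ℝ, -α * (x - y) / (1 - α) = -(c * (x - y)) := by
    intro x y; rw [hcdef]; field_simp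
  have eargΔ : -α * Δt / (1 - α) = -(c * Δt) := by rw [hcdef]; field_simp
  have CFDeq : ∀ t : ℝ, CFD α h t
      = (1 / (1 - α)) * ∫ s in (0:ℝ)..t, deriv h s * Real.exp (-(c * (t - s))) := by
    intro t
    unfold CFD
    congr 1
    apply intervalIntegral.integral_congr
    intro s _
    simp only
    rw [earg]
  have hM0 : 0 ≤ M := le_trans (abs_nonneg _) (hM 0 ⟨le_refl 0, hT.le⟩)
  set E : ℝ := Real.exp (-(c * Δt)) with hE
  have hE1 : E ≤ 1 := by rw [hE, Real.exp_le_one_iff]; nlinarith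
  have hE0 : 0 ≤ E := (Real.exp_pos _).le
  set R : ℝ := (1 / (1 - α)) * (c * M * Δt ^ 3 / 8) with hR
  have hR0 : 0 ≤ R := by positivity
  -- the per-interval estimate wrapped
  have coreW : ∀ a : ℝ, 0 ≤ a → a + Δt ≤ T →
      |(1 / (1 - α)) * (∫ s in a..(a + Δt), deriv h s * Real.exp (-(c * (a + Δt - s))))
        - (1 - E) / (α * Δt) * (h (a + Δt) - h a)| ≤ R := by
    intro a ha hb
    have hM' : ∀ t ∈ Set.Icc a (a + Δt), |deriv (deriv h) t| ≤ M := by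
      intro t ht; exact hM t ⟨le_trans ha ht.1, le_trans ht.2 hb⟩
    have hcore := core_est c M Δt a h hc hΔ hd1 hd2 hM'
    have efac : (1 / (1 - α)) * (∫ s in a..(a + Δt), deriv h s * Real.exp (-(c * (a + Δt - s))))
        - (1 - E) / (α * Δt) * (h (a + Δt) - h a)
        = (1 / (1 - α)) * ((∫ s in a..(a + Δt), deriv h s * Real.exp (-(c * (a + Δt - s))))
          - (1 - E) / (c * Δt) * (h (a + Δt) - h a)) := by
      rw [hE, hcdef]
      field_simp
    rw [efac, abs_mul, abs_of_nonneg (by positivity : (0:ℝ) ≤ 1 / (1 - α)), hR]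
    rw [← hE] at hcore
    apply mul_le_mul_of_nonneg_left hcore (by positivity)
  -- splitting of the CFD integral
  have splitI : ∀ a : ℝ, 0 ≤ a →
      CFD α h (a + Δt) = E * CFD α h a
        + (1 / (1 - α)) * ∫ s in a..(a + Δt), deriv h s * Real.exp (-(c * (a + Δt - s))) := by
    intro a ha
    rw [CFDeq, CFDeq]
    have wcont1 : Continuous (fun s : ℝ => deriv h s * Real.exp (-(c * (a + Δt - s)))) := by
      exact hd2.continuous.mul (by fun_prop)
    have i1 : IntervalIntegrable (fun s : ℝ => deriv h s * Real.exp (-(c * (a + Δt - s)))) volume 0 a := wcont1.intervalIntegrable 0 a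
    have i2 : IntervalIntegrable (fun s : ℝ => deriv h s * Real.exp (-(c * (a + Δt - s)))) volume a (a + Δt) := wcont1.intervalIntegrable a (a + Δt)
    rw [← intervalIntegral.integral_add_adjacent_intervals i1 i2]
    have e1 : (∫ s in (0:ℝ)..a, deriv h s * Real.exp (-(c * (a + Δt - s))))
        = E * ∫ s in (0:ℝ)..a, deriv h s * Real.exp (-(c * (a - s))) := by
      rw [← intervalIntegral.integral_const_mul]
      apply intervalIntegral.integral_congr
      intro s _
      simp only
      have eexp : Real.exp (-(c * (a + Δt - s))) = Real.exp (-(c * Δt)) * Real.exp (-(c * (a - s))) := by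
        rw [← Real.exp_add]
        congr 1
        ring
      rw [hE, eexp]
      ring
    rw [e1]
    ring
  -- main induction
  have main : ∀ k : ℕ, 1 ≤ k → k ≤ NT →
      |CFD α h ((k : ℝ) * Δt) - F k| ≤ k * R := by
    intro k hk
    induction k, hk using Nat.le_induction with
    | base =>
      intro _
      have h1NT : (1:ℝ) ≤ (NT:ℝ) := by exact_mod_cast hNT
      have hΔT : 0 + Δt ≤ T := by
        rw [zero_add, hΔt, div_le_iff₀ hNT0]
        nlinarith
      have H := coreW 0 le_rfl hΔT
      rw [zero_add] at H
      simp only [Nat.cast_one, one_mul]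
      rw [CFDeq, hF1, eargΔ, ← hE]
      exact H
    | succ k hk1 ih =>
      intro hkNT
      have hkNT' : k ≤ NT := by omega
      have IH := ih hkNT'
      set a : ℝ := (k : ℝ) * Δt with ha
      have ha0 : 0 ≤ a := by positivity
      have hbT : a + Δt ≤ T := by
        have : ((k:ℝ) + 1) ≤ (NT:ℝ) := by exact_mod_cast hkNT
        nlinarith
      have hFstep : F (k + 1) = E * F k + (1 - E) / (α * Δt) * (h (a + Δt) - h a) := by
        have hkk : k + 1 - 1 = k := rfl
        have e1 : (((k+1:ℕ)):ℝ) * Δt = a + Δt := by push_cast; rw [ha]; ring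
        have e2 : ((((k+1:ℕ)):ℝ) - 1) * Δt = a := by push_cast; rw [ha]; ring
        rw [hFk (k+1) (by omega), hkk, e1, e2, eargΔ, ← hE]
      have hsplit := splitI a ha0
      have ecast : ((k:ℝ) + 1) * Δt = a + Δt := by rw [ha]; ring
      have key : CFD α h (((k + 1 : ℕ) : ℝ) * Δt) - F (k + 1)
          = E * (CFD α h ((k:ℝ) * Δt) - F k)
            + ((1 / (1 - α)) * (∫ s in a..(a + Δt), deriv h s * Real.exp (-(c * (a + Δt - s))))
              - (1 - E) / (α * Δt) * (h (a + Δt) - h a)) := by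
        push_cast
        rw [ecast, hsplit, hFstep, ← ha]
        ring
      rw [key]
      calc |E * (CFD α h ((k:ℝ) * Δt) - F k)
            + ((1 / (1 - α)) * (∫ s in a..(a + Δt), deriv h s * Real.exp (-(c * (a + Δt - s))))
              - (1 - E) / (α * Δt) * (h (a + Δt) - h a))|
          ≤ |E * (CFD α h ((k:ℝ) * Δt) - F k)|
            + |(1 / (1 - α)) * (∫ s in a..(a + Δt), deriv h s * Real.exp (-(c * (a + Δt - s))))
              - (1 - E) / (α * Δt) * (h (a + Δt) - h a)| := abs_add_le _ _
        _ ≤ 1 * |CFD α h ((k:ℝ) * Δt) - F k| + R := by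
            rw [abs_mul, abs_of_nonneg hE0]
            exact add_le_add (mul_le_mul_of_nonneg_right hE1 (abs_nonneg _) |>.trans
              (le_of_eq rfl)) (coreW a ha0 hbT)
        _ ≤ 1 * ((k:ℝ) * R) + R := by
            apply add_le_add_left
            rw [one_mul, one_mul]
            exact IH
        _ = (((k + 1 : ℕ)) : ℝ) * R := by push_cast; ring
  -- conclude
  intro k hk1 hkNT
  have := main k hk1 hkNT
  apply le_trans this
  have hkT : (k:ℝ) * Δt ≤ T := by
    have : (k:ℝ) ≤ (NT:ℝ) := by exact_mod_cast hkNT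
    nlinarith
  have h8 : (0:ℝ) < 8 * (1 - α) ^ 2 := by positivity
  have hRval : (k:ℝ) * R = (α * M * Δt ^ 2 * ((k:ℝ) * Δt)) / (8 * (1 - α) ^ 2) := by
    rw [hR, hcdef]; field_simp
  have hgoal : α * T / (8 * (1 - α) ^ 2) * M * Δt ^ 2
      = (α * M * Δt ^ 2 * T) / (8 * (1 - α) ^ 2) := by ring
  rw [hRval, hgoal]
  have hnn : 0 ≤ α * M * Δt ^ 2 :=
    mul_nonneg (mul_nonneg hα0.le hM0) (sq_nonneg _)
  have hnum : α * M * Δt ^ 2 * ((k:ℝ) * Δt) ≤ α * M * Δt ^ 2 * T :=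
    mul_le_mul_of_nonneg_left hkT hnn
  gcongr
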